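/- For each l = 1, 2, 3 and each fixed (q, π) ∈ ℝ⁴ × ℝ⁴, the curve t ↦ (Q(t), Π(t)) := Ψ_l(t; q, π) is the exact solution of the Hamiltonian system with Hamiltonian V_l: it satisfies Q(0) = q, Π(0) = π, and for all t ∈ ℝ, Q′(t) = ∇_π V_l(Q(t), Π(t)) = (1/(4·I_l))·(Π(t)ᵀ S_l Q(t))·S_l Q(t) and Π′(t) = −∇_q V_l(Q(t), Π(t)) = (1/(4·I_l))·(Π(t)ᵀ S_l Q(t))·S_l Π(t). -/

import Mathlib

noncomputable section
open Matrix
open scoped InnerProductSpace BigOperators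

/-- `S₁ q = (−q₁, q₀, q₃, −q₂)`. -/
def S1 : Matrix (Fin 4) (Fin 4) ℝ := !![0,-1,0,0; 1,0,0,0; 0,0,0,1; 0,0,-1,0]
/-- `S₂ q = (−q₂, −q₃, q₀, q₁)`. -/
def S2 : Matrix (Fin 4) (Fin 4) ℝ := !![0,0,-1,0; 0,0,0,-1; 1,0,0,0; 0,1,0,0]
/-- `S₃ q = (−q₃, q₂, −q₁, q₀)`. -/
def S3 : Matrix (Fin 4) (Fin 4) ℝ := !![0,0,0,-1; 0,0,1,0; 0,-1,0,0; 1,0,0,0]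
/-- The family `S l`, `l = 1, 2, 3` (0-indexed). -/
def S : Fin 3 → Matrix (Fin 4) (Fin 4) ℝ := ![S1, S2, S3]

/-- The rotational kinetic-energy term `Vₗ(q, π) = (1/(8 Iₗ)) (πᵀ Sₗ q)²`. -/
def V (I : Fin 3 → ℝ) (l : Fin 3) (q π : Fin 4 → ℝ) : ℝ :=
  (1 / (8 * I l)) * (π ⬝ᵥ (S l *ᵥ q)) ^ 2

/-- `χₗ = (1/(4 Iₗ)) (πᵀ Sₗ q)`. -/
def chi (I : Fin 3 → ℝ) (l : Fin 3) (q π : Fin 4 → ℝ) : ℝ :=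
  (1 / (4 * I l)) * (π ⬝ᵥ (S l *ᵥ q))

/-- The map `Ψₗ(t; q, π) = (cos(χₗ t) q + sin(χₗ t) Sₗ q, cos(χₗ t) π + sin(χₗ t) Sₗ π)`. -/
def Psi (I : Fin 3 → ℝ) (l : Fin 3) (t : ℝ) (x : (Fin 4 → ℝ) × (Fin 4 → ℝ)) :
    (Fin 4 → ℝ) × (Fin 4 → ℝ) :=
  (Real.cos (chi I l x.1 x.2 * t) • x.1 + Real.sin (chi I l x.1 x.2 * t) • (S l *ᵥ x.1),
   Real.cos (chi I l x.1 x.2 * t) • x.2 + Real.sin (chi I l x.1 x.2 * t) • (S l *ᵥ x.2))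

lemma S_sq (l : Fin 3) (v : Fin 4 → ℝ) : S l *ᵥ (S l *ᵥ v) = -v := by
  fin_cases l <;> funext i <;> fin_cases i <;>
    simp [S, S1, S2, S3, mulVec, dotProduct, Fin.sum_univ_four, Matrix.vecHead, Matrix.vecTail]

lemma S_skew (l : Fin 3) (a b : Fin 4 → ℝ) : (S l *ᵥ a) ⬝ᵥ b = -(a ⬝ᵥ (S l *ᵥ b)) := by
  fin_cases l <;>
    simp [S, S1, S2, S3, mulVec, dotProduct, Fin.sum_univ_four, Matrix.vecHead, Matrix.vecTail] <;> ring

lemma S_orth (l : Fin 3) (a b : Fin 4 → ℝ) : (S l *ᵥ a) ⬝ᵥ (S l *ᵥ b) = a ⬝ᵥ b := by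
  fin_cases l <;>
    simp [S, S1, S2, S3, mulVec, dotProduct, Fin.sum_univ_four, Matrix.vecHead, Matrix.vecTail] <;> ring

/-- `t ↦ Ψₗ(t; q, π)` is the exact flow of the Hamiltonian system with Hamiltonian `Vₗ`. -/
theorem stmt6 (I : Fin 3 → ℝ) (hI : ∀ l, 0 < I l) (l : Fin 3) (q π : Fin 4 → ℝ) :
    Psi I l 0 (q, π) = (q, π) ∧
    ∀ t : ℝ, HasDerivAt (fun s => Psi I l s (q, π))
      (((1 / (4 * I l)) * ((Psi I l t (q, π)).2 ⬝ᵥ (S l *ᵥ (Psi I l t (q, π)).1))) •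
        (S l *ᵥ (Psi I l t (q, π)).1),
       ((1 / (4 * I l)) * ((Psi I l t (q, π)).2 ⬝ᵥ (S l *ᵥ (Psi I l t (q, π)).1))) •
        (S l *ᵥ (Psi I l t (q, π)).2)) t := by
  constructor
  · simp [Psi]
  intro t
  set c := chi I l q π with hc
  set α := c * t with hα
  -- natural derivative of each component
  have hid : HasDerivAt (fun s : ℝ => c * s) c t := by
    simpa using (hasDerivAt_id t).const_mul c
  have hd : ∀ v : Fin 4 → ℝ, HasDerivAt
      (fun s : ℝ => Real.cos (c * s) • v + Real.sin (c * s) • (S l *ᵥ v))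
      ((-Real.sin α * c) • v + (Real.cos α * c) • (S l *ᵥ v)) t := by
    intro v
    exact (((Real.hasDerivAt_cos α).comp t hid).smul_const v).add
      (((Real.hasDerivAt_sin α).comp t hid).smul_const (S l *ᵥ v))
  -- abbreviations for the flow components
  have hQ : (Psi I l t (q, π)).1 = Real.cos α • q + Real.sin α • (S l *ᵥ q) := rfl
  have hP : (Psi I l t (q, π)).2 = Real.cos α • π + Real.sin α • (S l *ᵥ π) := rfl
  have hSQ : S l *ᵥ (Psi I l t (q, π)).1 = Real.cos α • (S l *ᵥ q) - Real.sin α • q := by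
    rw [hQ, mulVec_add, mulVec_smul, mulVec_smul, S_sq]
    funext i; simp; ring
  have hSP : S l *ᵥ (Psi I l t (q, π)).2 = Real.cos α • (S l *ᵥ π) - Real.sin α • π := by
    rw [hP, mulVec_add, mulVec_smul, mulVec_smul, S_sq]
    funext i; simp; ring
  -- conservation of π ⬝ S q along the flow
  have hcons : (Psi I l t (q, π)).2 ⬝ᵥ (S l *ᵥ (Psi I l t (q, π)).1) = π ⬝ᵥ (S l *ᵥ q) := by
    rw [hP, hSQ]
    simp only [dotProduct_sub, add_dotProduct, smul_dotProduct, dotProduct_smul,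
      smul_eq_mul, S_orth, S_skew l π q]
    have := Real.sin_sq_add_cos_sq α
    linear_combination (π ⬝ᵥ (S l *ᵥ q)) * this
  have hcoef : (1 / (4 * I l)) * ((Psi I l t (q, π)).2 ⬝ᵥ (S l *ᵥ (Psi I l t (q, π)).1)) = c := by
    rw [hcons, hc, chi]
  have e1 : ((1 / (4 * I l)) * ((Psi I l t (q, π)).2 ⬝ᵥ (S l *ᵥ (Psi I l t (q, π)).1))) •
      (S l *ᵥ (Psi I l t (q, π)).1) = (-Real.sin α * c) • q + (Real.cos α * c) • (S l *ᵥ q) := by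
    rw [hcoef, hSQ]; funext i; simp; ring
  have e2 : ((1 / (4 * I l)) * ((Psi I l t (q, π)).2 ⬝ᵥ (S l *ᵥ (Psi I l t (q, π)).1))) •
      (S l *ᵥ (Psi I l t (q, π)).2) = (-Real.sin α * c) • π + (Real.cos α * c) • (S l *ᵥ π) := by
    rw [hcoef, hSP]; funext i; simp; ring
  rw [show (fun s => Psi I l s (q, π)) = fun s =>
      (Real.cos (c * s) • q + Real.sin (c * s) • (S l *ᵥ q),
       Real.cos (c * s) • π + Real.sin (c * s) • (S l *ᵥ π)) from rfl, e1, e2]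
  exact (hd q).prodMk (hd π)
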